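/- Let λ be a partition and let SYT_∞(λ) be the set of bijective fillings of the infinite diagram λ^{(∞)} (the union of the diagrams λ^{(n)} = (n - |λ|, λ) over n ≥ |λ| + λ₁) by positive integers, increasing along rows and columns. Define inv(τ) as the number of pairs of boxes (□₁, □₂) such that the column-standard filling orders them one way and τ orders them the other way. Then for each k ≥ 0, only finitely many τ ∈ SYT_∞(λ) satisfy inv(τ) ≤ k. -/

import Mathlib

/-- The infinite Young diagram `λ^(∞)`: an infinite first row (row `0`) together with a
copy of the diagram of `λ` shifted down by one row. -/
def InfDiag (lam : YoungDiagram) : Set (ℕ × ℕ) :=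
  {c : ℕ × ℕ | c.1 = 0} ∪ {c : ℕ × ℕ | ∃ i j : ℕ, (i, j) ∈ lam.cells ∧ c = (i + 1, j)}

/-- A standard Young tableau of the infinite shape `λ^(∞)`: a bijective filling of the
cells of `λ^(∞)` by the positive integers, strictly increasing along rows and columns,
and zero outside the diagram. -/
def IsInfSYT (lam : YoungDiagram) (τ : ℕ × ℕ → ℕ) : Prop :=
  (∀ c : ℕ × ℕ, c ∉ InfDiag lam → τ c = 0) ∧
  Set.BijOn τ (InfDiag lam) {n : ℕ | 1 ≤ n} ∧
  (∀ i j₁ j₂ : ℕ, (i, j₁) ∈ InfDiag lam → (i, j₂) ∈ InfDiag lam →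
    j₁ < j₂ → τ (i, j₁) < τ (i, j₂)) ∧
  (∀ i₁ i₂ j : ℕ, (i₁, j) ∈ InfDiag lam → (i₂, j) ∈ InfDiag lam →
    i₁ < i₂ → τ (i₁, j) < τ (i₂, j))

/-- The set of inversion pairs of `τ` relative to the column-standard filling `τ₀`:
pairs of cells of the diagram ordered one way by `τ₀` and the other way by `τ`. -/
def InvSet (lam : YoungDiagram) (τ₀ τ : ℕ × ℕ → ℕ) : Set ((ℕ × ℕ) × (ℕ × ℕ)) :=
  {p | p.1 ∈ InfDiag lam ∧ p.2 ∈ InfDiag lam ∧ τ₀ p.1 < τ₀ p.2 ∧ τ p.2 < τ p.1}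

namespace InfSYTAux

lemma mem_row0 (lam : YoungDiagram) (j : ℕ) : ((0 : ℕ), j) ∈ InfDiag lam :=
  Or.inl rfl

lemma mem_shift (lam : YoungDiagram) {i j : ℕ} :
    ((i + 1 : ℕ), j) ∈ InfDiag lam ↔ (i, j) ∈ lam := by
  constructor
  · rintro (h | ⟨i', j', hm, he⟩)
    · simp only [Set.mem_setOf_eq] at h; omega
    · rw [Prod.mk.injEq] at he
      obtain ⟨h1, h2⟩ := he
      have hii : i' = i := by omega
      subst hii; subst h2
      simpa using hm
  · intro h
    exact Or.inr ⟨i, j, by simpa using h, rfl⟩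

lemma ncard_Icc_one (m : ℕ) : (Set.Icc 1 m).ncard = m := by
  rw [← Finset.coe_Icc, Set.ncard_coe_finset, Nat.card_Icc]; omega

/-- The set of cells whose label under a bijective filling lies in `[1, m]` is finite
of cardinality `m`. -/
lemma slice_spec (lam : YoungDiagram) (τ : ℕ × ℕ → ℕ)
    (hb : Set.BijOn τ (InfDiag lam) {n : ℕ | 1 ≤ n}) (m : ℕ) :
    (InfDiag lam ∩ τ ⁻¹' Set.Icc 1 m).Finite ∧
      (InfDiag lam ∩ τ ⁻¹' Set.Icc 1 m).ncard = m := by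
  have hinj : Set.InjOn τ (InfDiag lam ∩ τ ⁻¹' Set.Icc 1 m) :=
    hb.injOn.mono Set.inter_subset_left
  have himg : τ '' (InfDiag lam ∩ τ ⁻¹' Set.Icc 1 m) = Set.Icc 1 m := by
    apply Set.Subset.antisymm
    · rintro n ⟨c, ⟨_, hc2⟩, rfl⟩
      exact hc2
    · intro n hn
      obtain ⟨c, hc, rfl⟩ := hb.surjOn (show 1 ≤ n from hn.1)
      exact ⟨c, ⟨hc, hn⟩, rfl⟩
  have hfin : (InfDiag lam ∩ τ ⁻¹' Set.Icc 1 m).Finite :=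
    Set.Finite.of_finite_image (by rw [himg]; exact Set.finite_Icc 1 m) hinj
  refine ⟨hfin, ?_⟩
  rw [← Set.ncard_image_of_injOn hinj, himg, ncard_Icc_one]

lemma one_le_val (lam : YoungDiagram) {τ : ℕ × ℕ → ℕ}
    (hb : Set.BijOn τ (InfDiag lam) {n : ℕ | 1 ≤ n}) {c : ℕ × ℕ}
    (hc : c ∈ InfDiag lam) : 1 ≤ τ c := hb.mapsTo hc

/-- Displacement bound: if the inversion set has at most `k` elements then every label
moves by at most `k`. -/
lemma displacement (lam : YoungDiagram) (τ₀ τ : ℕ × ℕ → ℕ)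
    (hb₀ : Set.BijOn τ₀ (InfDiag lam) {n : ℕ | 1 ≤ n})
    (hb : Set.BijOn τ (InfDiag lam) {n : ℕ | 1 ≤ n}) (k : ℕ)
    (hfin : (InvSet lam τ₀ τ).Finite) (hcard : (InvSet lam τ₀ τ).ncard ≤ k) :
    ∀ c ∈ InfDiag lam, τ c ≤ τ₀ c + k ∧ τ₀ c ≤ τ c + k := by
  intro c hc
  have h1c : 1 ≤ τ c := one_le_val lam hb hc
  have h1c₀ : 1 ≤ τ₀ c := one_le_val lam hb₀ hc
  constructor
  · -- τ c ≤ τ₀ c + k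
    by_contra hlt
    push_neg at hlt
    set A := InfDiag lam ∩ τ ⁻¹' Set.Icc 1 (τ c - 1) with hA
    set B := InfDiag lam ∩ τ₀ ⁻¹' Set.Icc 1 (τ₀ c - 1) with hB
    obtain ⟨hAfin, hAcard⟩ := slice_spec lam τ hb (τ c - 1)
    obtain ⟨hBfin, hBcard⟩ := slice_spec lam τ₀ hb₀ (τ₀ c - 1)
    -- A \ B injects into InvSet via c' ↦ (c, c')
    have hsub : (fun c' => (c, c')) '' (A \ B) ⊆ InvSet lam τ₀ τ := by
      rintro p ⟨c', ⟨⟨hc'D, hc'τ⟩, hc'B⟩, rfl⟩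
      have hne : c' ≠ c := by
        intro h; subst h
        have := hc'τ.2; omega
      have hτ0ne : τ₀ c' ≠ τ₀ c := fun h => hne (hb₀.injOn hc'D hc h)
      have hτ0gt : τ₀ c < τ₀ c' := by
        rcases lt_or_gt_of_ne hτ0ne with h | h
        · exact absurd ⟨one_le_val lam hb₀ hc'D, by omega⟩ (fun hh => hc'B ⟨hc'D, hh⟩)
        · exact h
      simp only [InvSet, Set.mem_setOf_eq]
      exact ⟨hc, hc'D, hτ0gt, by have := hc'τ.2; omega⟩
    have hABfin : (A \ B).Finite := hAfin.subset Set.diff_subset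
    have hinj2 : Set.InjOn (fun c' => (c, c')) (A \ B) := by
      intro x _ y _ h
      simpa using congrArg Prod.snd h
    have hle1 : (A \ B).ncard ≤ k := by
      calc (A \ B).ncard = ((fun c' => (c, c')) '' (A \ B)).ncard :=
            (Set.ncard_image_of_injOn hinj2).symm
        _ ≤ (InvSet lam τ₀ τ).ncard := Set.ncard_le_ncard hsub hfin
        _ ≤ k := hcard
    have hge : (τ c - 1) ≤ (A \ B).ncard + (τ₀ c - 1) := by
      have hsub2 : A ⊆ (A \ B) ∪ B := fun x hx => by
        by_cases h : x ∈ B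
        · exact Or.inr h
        · exact Or.inl ⟨hx, h⟩
      calc (τ c - 1) = A.ncard := hAcard.symm
        _ ≤ ((A \ B) ∪ B).ncard := Set.ncard_le_ncard hsub2 (hABfin.union hBfin)
        _ ≤ (A \ B).ncard + B.ncard := Set.ncard_union_le _ _
        _ = (A \ B).ncard + (τ₀ c - 1) := by rw [hBcard]
    omega
  · -- τ₀ c ≤ τ c + k
    by_contra hlt
    push_neg at hlt
    set A := InfDiag lam ∩ τ₀ ⁻¹' Set.Icc 1 (τ₀ c - 1) with hA
    set B := InfDiag lam ∩ τ ⁻¹' Set.Icc 1 (τ c - 1) with hB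
    obtain ⟨hAfin, hAcard⟩ := slice_spec lam τ₀ hb₀ (τ₀ c - 1)
    obtain ⟨hBfin, hBcard⟩ := slice_spec lam τ hb (τ c - 1)
    have hsub : (fun c' => (c', c)) '' (A \ B) ⊆ InvSet lam τ₀ τ := by
      rintro p ⟨c', ⟨⟨hc'D, hc'τ⟩, hc'B⟩, rfl⟩
      have hne : c' ≠ c := by
        intro h; subst h
        have := hc'τ.2; omega
      have hτne : τ c' ≠ τ c := fun h => hne (hb.injOn hc'D hc h)
      have hτgt : τ c < τ c' := by
        rcases lt_or_gt_of_ne hτne with h | h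
        · exact absurd ⟨one_le_val lam hb hc'D, by omega⟩ (fun hh => hc'B ⟨hc'D, hh⟩)
        · exact h
      simp only [InvSet, Set.mem_setOf_eq]
      exact ⟨hc'D, hc, by have := hc'τ.2; omega, hτgt⟩
    have hABfin : (A \ B).Finite := hAfin.subset Set.diff_subset
    have hinj2 : Set.InjOn (fun c' => (c', c)) (A \ B) := by
      intro x _ y _ h
      simpa using congrArg Prod.fst h
    have hle1 : (A \ B).ncard ≤ k := by
      calc (A \ B).ncard = ((fun c' => (c', c)) '' (A \ B)).ncard :=
            (Set.ncard_image_of_injOn hinj2).symm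
        _ ≤ (InvSet lam τ₀ τ).ncard := Set.ncard_le_ncard hsub hfin
        _ ≤ k := hcard
    have hge : (τ₀ c - 1) ≤ (A \ B).ncard + (τ c - 1) := by
      have hsub2 : A ⊆ (A \ B) ∪ B := fun x hx => by
        by_cases h : x ∈ B
        · exact Or.inr h
        · exact Or.inl ⟨hx, h⟩
      calc (τ₀ c - 1) = A.ncard := hAcard.symm
        _ ≤ ((A \ B) ∪ B).ncard := Set.ncard_le_ncard hsub2 (hABfin.union hBfin)
        _ ≤ (A \ B).ncard + B.ncard := Set.ncard_union_le _ _
        _ = (A \ B).ncard + (τ c - 1) := by rw [hBcard]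
    omega

/-- Monotonicity of a tableau along the infinite first row. -/
lemma tail_mono (lam : YoungDiagram) (τ : ℕ × ℕ → ℕ)
    (hrow : ∀ i j₁ j₂ : ℕ, (i, j₁) ∈ InfDiag lam → (i, j₂) ∈ InfDiag lam →
      j₁ < j₂ → τ (i, j₁) < τ (i, j₂)) (j0 : ℕ) :
    ∀ d s : ℕ, τ (0, j0 + s) + d ≤ τ (0, j0 + (s + d)) := by
  intro d
  induction d with
  | zero => intro s; simp
  | succ d ih =>
    intro s
    have h1 := ih s
    have h2 : τ (0, j0 + (s + d)) < τ (0, j0 + (s + d + 1)) :=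
      hrow 0 (j0 + (s + d)) (j0 + (s + d + 1)) (mem_row0 lam _) (mem_row0 lam _)
        (by omega)
    have : j0 + (s + (d + 1)) = j0 + (s + d + 1) := by omega
    rw [this]
    omega

/-- Consecutive labels along the tail of the first row of a column-standard filling. -/
lemma tail_consec (lam : YoungDiagram) (τ₀ : ℕ × ℕ → ℕ) (hτ₀ : IsInfSYT lam τ₀)
    (hcs : ∀ i j : ℕ, (i, j) ∈ InfDiag lam → (i + 1, j) ∈ InfDiag lam →
      τ₀ (i + 1, j) = τ₀ (i, j) + 1) {j : ℕ} (hj : lam.rowLen 0 ≤ j) :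
    τ₀ (0, j + 1) = τ₀ (0, j) + 1 := by
  obtain ⟨hzero, hb₀, hrow, hcol⟩ := hτ₀
  have hval : (τ₀ (0, j) + 1) ∈ {n : ℕ | 1 ≤ n} := by
    simp only [Set.mem_setOf_eq]; omega
  obtain ⟨c', hc'D, hc'⟩ := hb₀.surjOn hval
  obtain ⟨i', j'⟩ := c'
  match i', hc'D, hc' with
  | 0, hc'D, hc' =>
    -- c' = (0, j') with τ₀ (0,j') = τ₀ (0,j) + 1
    have hgt : j < j' := by
      by_contra h
      push_neg at h
      rcases Nat.lt_or_ge j' j with h' | h'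
      · have := hrow 0 j' j (mem_row0 lam _) (mem_row0 lam _) h'
        omega
      · have : j' = j := by omega
        subst this; omega
    have : j' = j + 1 := by
      by_contra h
      have hlt : j + 1 < j' := by omega
      have h1 := hrow 0 j (j + 1) (mem_row0 lam _) (mem_row0 lam _) (by omega)
      have h2 := hrow 0 (j + 1) j' (mem_row0 lam _) (mem_row0 lam _) hlt
      omega
    subst this; exact hc'
  | (i + 1), hc'D, hc' =>
    -- impossible case
    exfalso
    have hmem : (i, j') ∈ lam := (mem_shift lam).mp hc'D
    have hprev : ((i : ℕ), j') ∈ InfDiag lam := by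
      match i, hmem with
      | 0, _ => exact mem_row0 lam j'
      | (i'' + 1), hmem =>
        exact (mem_shift lam).mpr (lam.up_left_mem (Nat.le_succ i'') le_rfl hmem)
    have := hcs i j' hprev hc'D
    have heq : τ₀ (i, j') = τ₀ (0, j) := by omega
    have := hb₀.injOn hprev (mem_row0 lam j) heq
    rw [Prod.mk.injEq] at this
    obtain ⟨hi0, hj0⟩ := this
    subst hi0; subst hj0
    have : (0, j') ∈ lam := (mem_shift lam).mp hc'D
    rw [YoungDiagram.mem_iff_lt_rowLen] at this
    omega

lemma tail_val (lam : YoungDiagram) (τ₀ : ℕ × ℕ → ℕ) (hτ₀ : IsInfSYT lam τ₀)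
    (hcs : ∀ i j : ℕ, (i, j) ∈ InfDiag lam → (i + 1, j) ∈ InfDiag lam →
      τ₀ (i + 1, j) = τ₀ (i, j) + 1) (t : ℕ) :
    τ₀ (0, lam.rowLen 0 + t) = τ₀ (0, lam.rowLen 0) + t := by
  induction t with
  | zero => rfl
  | succ t ih =>
    have : lam.rowLen 0 + (t + 1) = (lam.rowLen 0 + t) + 1 := by omega
    rw [this, tail_consec lam τ₀ hτ₀ hcs (by omega), ih]
    omega

/-- Any cell with a large `τ₀`-label is a tail cell of the first row. -/
lemma tail_cell (lam : YoungDiagram) (τ₀ : ℕ × ℕ → ℕ) (hτ₀ : IsInfSYT lam τ₀)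
    (hcs : ∀ i j : ℕ, (i, j) ∈ InfDiag lam → (i + 1, j) ∈ InfDiag lam →
      τ₀ (i + 1, j) = τ₀ (i, j) + 1) {c : ℕ × ℕ} (hc : c ∈ InfDiag lam)
    (h : τ₀ (0, lam.rowLen 0) ≤ τ₀ c) :
    c = (0, lam.rowLen 0 + (τ₀ c - τ₀ (0, lam.rowLen 0))) := by
  set t := τ₀ c - τ₀ (0, lam.rowLen 0) with ht
  have hval : τ₀ (0, lam.rowLen 0 + t) = τ₀ c := by
    rw [tail_val lam τ₀ hτ₀ hcs]; omega
  exact (hτ₀.2.1.injOn hc (mem_row0 lam _) hval.symm)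

end InfSYTAux

/-- Let `τ₀` be the column-standard filling of `λ^(∞)` (vertically adjacent boxes carry
consecutive labels). For each `k`, only finitely many standard Young tableaux of shape
`λ^(∞)` have at most `k` inversions. -/
theorem finitely_many_bounded_inv (lam : YoungDiagram) (τ₀ : ℕ × ℕ → ℕ)
    (hτ₀ : IsInfSYT lam τ₀)
    (hcs : ∀ i j : ℕ, (i, j) ∈ InfDiag lam → (i + 1, j) ∈ InfDiag lam →
      τ₀ (i + 1, j) = τ₀ (i, j) + 1)
    (k : ℕ) :
    {τ : ℕ × ℕ → ℕ | IsInfSYT lam τ ∧ (InvSet lam τ₀ τ).encard ≤ k}.Finite := by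
  classical
  open InfSYTAux in
  set r0 := lam.rowLen 0 with hr0
  set N0 := τ₀ (0, r0) with hN0
  have hb₀ := hτ₀.2.1
  have hN0pos : 1 ≤ N0 := one_le_val lam hb₀ (mem_row0 lam r0)
  set M := N0 + k with hM
  -- Main claim: every tableau in the set agrees with τ₀ on cells with τ₀-label > M.
  have key : ∀ τ : ℕ × ℕ → ℕ, IsInfSYT lam τ → (InvSet lam τ₀ τ).encard ≤ k →
      (∀ c ∈ InfDiag lam, τ c ≤ τ₀ c + k ∧ τ₀ c ≤ τ c + k) ∧
      (∀ c ∈ InfDiag lam, M < τ₀ c → τ c = τ₀ c) := by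
    intro τ hτ hk
    obtain ⟨hfin, n₀, hn₀, hn₀k⟩ := Set.encard_le_coe_iff.mp hk
    have hncard : (InvSet lam τ₀ τ).ncard ≤ k := by
      rw [Set.ncard_def, hn₀]; simpa using hn₀k
    have hb := hτ.2.1
    have hdisp := displacement lam τ₀ τ hb₀ hb k hfin hncard
    refine ⟨hdisp, ?_⟩
    have hmono := tail_mono lam τ hτ.2.2.1 r0
    -- Step 1: upper bound along the tail.
    have hup : ∀ t : ℕ, τ (0, r0 + t) ≤ N0 + t := by
      intro t
      by_contra hcon
      push_neg at hcon
      obtain ⟨hVfin, hVcard⟩ := slice_spec lam τ hb (N0 + t)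
      obtain ⟨hWfin, hWcard⟩ := slice_spec lam τ₀ hb₀ (N0 + t + k)
      set V := InfDiag lam ∩ τ ⁻¹' Set.Icc 1 (N0 + t) with hV
      set W := InfDiag lam ∩ τ₀ ⁻¹' Set.Icc 1 (N0 + t + k) with hW
      set T : Set (ℕ × ℕ) := (fun s => ((0 : ℕ), r0 + s)) '' Set.Icc t (t + k) with hT
      have hTinj : Set.InjOn (fun s => ((0 : ℕ), r0 + s)) (Set.Icc t (t + k)) := by
        intro x _ y _ h
        rw [Prod.mk.injEq] at h
        omega
      have hTfin : T.Finite := (Set.finite_Icc t (t + k)).image _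
      have hTcard : T.ncard = k + 1 := by
        rw [hT, Set.ncard_image_of_injOn hTinj, ← Finset.coe_Icc,
          Set.ncard_coe_finset, Nat.card_Icc]
        omega
      have hTW : T ⊆ W := by
        rintro c ⟨s, hs, rfl⟩
        refine ⟨mem_row0 lam _, ?_⟩
        have := tail_val lam τ₀ hτ₀ hcs s
        simp only [Set.mem_preimage, Set.mem_Icc]
        rw [← hr0] at this
        rw [this, ← hN0]
        constructor <;> [omega; skip]
        have := hs.2; omega
      have hVWT : V ⊆ W \ T := by
        rintro c ⟨hcD, hcτ⟩
        simp only [Set.mem_preimage, Set.mem_Icc] at hcτ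
        refine ⟨⟨hcD, ?_⟩, ?_⟩
        · simp only [Set.mem_preimage, Set.mem_Icc]
          have := (hdisp c hcD).2
          have := one_le_val lam hb₀ hcD
          omega
        · rintro ⟨s, hs, rfl⟩
          simp only at hcτ
          have h1 := hmono (s - t) t
          have : t + (s - t) = s := by have := hs.1; omega
          rw [this] at h1
          omega
      have hle : (N0 + t) ≤ N0 + t + k - (k + 1) := by
        calc (N0 + t) = V.ncard := hVcard.symm
          _ ≤ (W \ T).ncard := Set.ncard_le_ncard hVWT hWfin.diff
          _ = W.ncard - T.ncard := Set.ncard_diff hTW hTfin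
          _ = N0 + t + k - (k + 1) := by rw [hWcard, hTcard]
      omega
    -- Step 2: lower bound along the tail, for t ≥ k.
    have hlow : ∀ t : ℕ, k ≤ t → N0 + t ≤ τ (0, r0 + t) := by
      intro t hkt
      by_contra hcon
      push_neg at hcon
      obtain ⟨hVfin, hVcard⟩ := slice_spec lam τ hb (N0 + t - 1)
      obtain ⟨hUfin, hUcard⟩ := slice_spec lam τ₀ hb₀ (N0 - 1)
      set V := InfDiag lam ∩ τ ⁻¹' Set.Icc 1 (N0 + t - 1) with hV
      set U := InfDiag lam ∩ τ₀ ⁻¹' Set.Icc 1 (N0 - 1) with hU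
      set T : Set (ℕ × ℕ) := (fun s => ((0 : ℕ), r0 + s)) '' Set.Icc 0 t with hT
      have hTinj : Set.InjOn (fun s => ((0 : ℕ), r0 + s)) (Set.Icc 0 t) := by
        intro x _ y _ h
        rw [Prod.mk.injEq] at h
        omega
      have hTfin : T.Finite := (Set.finite_Icc 0 t).image _
      have hTcard : T.ncard = t + 1 := by
        rw [hT, Set.ncard_image_of_injOn hTinj, ← Finset.coe_Icc,
          Set.ncard_coe_finset, Nat.card_Icc]
        omega
      have hUV : U ⊆ V := by
        rintro c ⟨hcD, hcτ⟩
        simp only [Set.mem_preimage, Set.mem_Icc] at hcτ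
        refine ⟨hcD, ?_⟩
        simp only [Set.mem_preimage, Set.mem_Icc]
        have := (hdisp c hcD).1
        have := one_le_val lam hb hcD
        omega
      have hTV : T ⊆ V := by
        rintro c ⟨s, hs, rfl⟩
        refine ⟨mem_row0 lam _, ?_⟩
        simp only [Set.mem_preimage, Set.mem_Icc]
        have h1 := hmono (t - s) s
        have : s + (t - s) = t := by have := hs.2; omega
        rw [this] at h1
        have := one_le_val lam hb (mem_row0 lam (r0 + s))
        omega
      have hdisj : Disjoint U T := by
        rw [Set.disjoint_left]
        rintro c hcU ⟨s, hs, rfl⟩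
        obtain ⟨_, hτ0⟩ := hcU
        simp only [Set.mem_preimage, Set.mem_Icc] at hτ0
        have := tail_val lam τ₀ hτ₀ hcs s
        rw [← hr0, ← hN0] at this
        omega
      have hle : (N0 - 1) + (t + 1) ≤ N0 + t - 1 := by
        calc (N0 - 1) + (t + 1) = U.ncard + T.ncard := by rw [hUcard, hTcard]
          _ = (U ∪ T).ncard := (Set.ncard_union_eq hdisj hUfin hTfin).symm
          _ ≤ V.ncard := Set.ncard_le_ncard (Set.union_subset hUV hTV) hVfin
          _ = N0 + t - 1 := hVcard
      omega
    -- Combine.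
    intro c hcD hcM
    have hge : τ₀ (0, lam.rowLen 0) ≤ τ₀ c := by rw [← hr0, ← hN0]; omega
    have htc := tail_cell lam τ₀ hτ₀ hcs hcD hge
    rw [← hr0, ← hN0] at htc
    set t := τ₀ c - N0 with htdef
    have hkt : k ≤ t := by omega
    rw [htc]
    have hv := tail_val lam τ₀ hτ₀ hcs t
    rw [← hr0, ← hN0] at hv
    rw [hv]
    have h1 := hup t
    have h2 := hlow t hkt
    omega
  -- Finiteness via an injection into a finite function space.
  obtain ⟨hBfin, _⟩ := slice_spec lam τ₀ hb₀ M
  set B := InfDiag lam ∩ τ₀ ⁻¹' Set.Icc 1 M with hB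
  haveI : Finite ↥B := hBfin.to_subtype
  set f : (ℕ × ℕ → ℕ) → (↥B → Fin (M + k + 1)) :=
    fun τ c => ⟨min (τ ↑c) (M + k), Nat.lt_succ_of_le (min_le_right _ _)⟩ with hf
  apply Set.Finite.of_finite_image (f := f)
  · exact Set.toFinite _
  · intro τ₁ hτ₁ τ₂ hτ₂ hfeq
    obtain ⟨hS₁, hk₁⟩ := hτ₁
    obtain ⟨hS₂, hk₂⟩ := hτ₂
    obtain ⟨hdisp₁, hfix₁⟩ := key τ₁ hS₁ hk₁
    obtain ⟨hdisp₂, hfix₂⟩ := key τ₂ hS₂ hk₂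
    funext c
    by_cases hcD : c ∈ InfDiag lam
    · by_cases hcB : c ∈ B
      · have := congrFun hfeq ⟨c, hcB⟩
        simp only [hf, Fin.mk.injEq] at this
        have h1 : τ₁ c ≤ M + k := by
          have := (hdisp₁ c hcD).1
          have hτ0 : τ₀ c ≤ M := hcB.2.2
          omega
        have h2 : τ₂ c ≤ M + k := by
          have := (hdisp₂ c hcD).1
          have hτ0 : τ₀ c ≤ M := hcB.2.2
          omega
        rwa [min_eq_left h1, min_eq_left h2] at this
      · have hτ0M : M < τ₀ c := by
          by_contra h
          push_neg at h
          exact hcB ⟨hcD, ⟨one_le_val lam hb₀ hcD, h⟩⟩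
        rw [hfix₁ c hcD hτ0M, hfix₂ c hcD hτ0M]
    · rw [hS₁.1 c hcD, hS₂.1 c hcD]
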